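/- Let $d \geq 2$ and suppose $y : [0,\infty) \to [0,\infty)$ is absolutely continuous and satisfies $y'(t) + \frac{C_d}{1+t} y(t) \leq C C_d (1+t)^{-d/2 - 1}(1 + \int_0^t y(s)^2\,ds)$ for constants $C, C_d > 0$ with $C_d > d/2 + 1$, together with the a priori bound $y(t) \leq C_0 \ln^{-3}(e+t)$. Then there exists $C_1$ such that $y(t) \leq C_1 (1+t)^{-d/2}$ for all $t \geq 0$. -/

import Mathlib

open MeasureTheory

set_option maxHeartbeats 1000000 in
/-- Bootstrap lemma underlying the optimal decay rate, (5.29)-(5.32) of the paper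
(with `y = ‖u‖_{L²}²`): from `y' + C_d/(1+t) y ≤ C C_d (1+t)^{-d/2-1}(1 + ∫₀ᵗ y²)`
and a logarithmic a priori bound, deduce `y(t) ≤ C₁ (1+t)^{-d/2}`. -/
theorem stmt_15 (d : ℕ) (hd : 2 ≤ d) (C Cd C₀ : ℝ)
    (hC : 0 < C) (hCd : (d : ℝ) / 2 + 1 < Cd)
    (y y' : ℝ → ℝ)
    (hy : ∀ t, 0 ≤ t → 0 ≤ y t)
    (hderiv : ∀ t, 0 ≤ t → HasDerivAt y (y' t) t)
    (hineq : ∀ t, 0 ≤ t →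
      y' t + Cd / (1 + t) * y t
        ≤ C * Cd * (1 + t) ^ (-(d : ℝ)/2 - 1) * (1 + ∫ s in (0:ℝ)..t, (y s) ^ 2))
    (hlog : ∀ t, 0 ≤ t → y t ≤ C₀ / (Real.log (Real.exp 1 + t)) ^ 3) :
    ∃ C₁ : ℝ, 0 < C₁ ∧ ∀ t, 0 ≤ t → y t ≤ C₁ * (1 + t) ^ (-(d : ℝ)/2) := by
  obtain ⟨e, he⟩ : ∃ e : ℝ, e = Real.exp 1 := ⟨_, rfl⟩
  simp only [← he] at hlog
  have he1 : (1:ℝ) < e := by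
    have := Real.add_one_lt_exp (one_ne_zero (α := ℝ)); rw [← he] at this; linarith
  obtain ⟨p, hp⟩ : ∃ p : ℝ, p = (d:ℝ)/2 := ⟨_, rfl⟩
  have hp1 : 1 ≤ p := by
    have : (2:ℝ) ≤ (d:ℝ) := by exact_mod_cast hd
    rw [hp]; linarith
  have hCdp : p + 1 < Cd := by rw [hp]; exact hCd
  have hCd0 : 0 < Cd := by linarith
  have hC₀ : 0 ≤ C₀ := by
    have h0 := hlog 0 le_rfl
    have h1 : Real.log (e + 0) = 1 := by rw [add_zero, he, Real.log_exp]
    rw [h1] at h0; norm_num at h0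
    exact le_trans (hy 0 le_rfl) h0
  -- continuity of y on the right half line
  have hyc : ∀ t, 0 ≤ t → ContinuousAt y t := fun t ht => (hderiv t ht).continuousAt
  -- extended function Y
  set Y : ℝ → ℝ := fun t => y (max t 0) with hYdef
  have hYc : Continuous Y := by
    rw [continuous_iff_continuousAt]; intro x
    have h1 : ContinuousAt (fun t : ℝ => max t 0) x :=
      (continuous_id.max continuous_const).continuousAt
    exact ContinuousAt.comp (hyc _ (le_max_right x 0)) h1
  have hYy : ∀ t, 0 ≤ t → Y t = y t := by
    intro t ht; simp only [hYdef, max_eq_left ht]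
  have hY0 : ∀ t, 0 ≤ Y t := fun t => hy _ (le_max_right _ _)
  have hYint : ∀ a b : ℝ, IntervalIntegrable (fun s => Y s ^ 2) volume a b :=
    fun a b => (hYc.pow 2).intervalIntegrable a b
  -- the primitive F of Y^2
  set F : ℝ → ℝ := fun t => ∫ s in (0:ℝ)..t, Y s ^ 2 with hFdef
  have hFc : Continuous F := intervalIntegral.continuous_primitive hYint 0
  have hFmono : Monotone F := by
    intro a b hab
    have hadd := intervalIntegral.integral_add_adjacent_intervals (hYint 0 a) (hYint a b)
    have h2 : 0 ≤ ∫ s in a..b, Y s ^ 2 :=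
      intervalIntegral.integral_nonneg hab (fun u _ => sq_nonneg _)
    simp only [hFdef]; rw [← hadd]; linarith
  have hF0 : F 0 = 0 := intervalIntegral.integral_same
  have hFnn : ∀ t, 0 ≤ t → 0 ≤ F t := by
    intro t ht; rw [← hF0]; exact hFmono ht
  have hFy : ∀ t, 0 ≤ t → (∫ s in (0:ℝ)..t, y s ^ 2) = F t := by
    intro t ht
    apply intervalIntegral.integral_congr
    intro s hs
    rw [Set.uIcc_of_le ht] at hs
    simp only [hYy s hs.1]
  -- the function h and its primitive H
  obtain ⟨q, hq⟩ : ∃ q : ℝ, q = Cd - p - 1 := ⟨_, rfl⟩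
  have hq0 : 0 < q := by rw [hq]; linarith
  set h : ℝ → ℝ := fun s => C * Cd * (1 + max s 0) ^ q * (1 + F s) with hhdef
  have hmaxpos : ∀ s : ℝ, (0:ℝ) < 1 + max s 0 := by
    intro s; have := le_max_right s 0; linarith
  have hhc : Continuous h := by
    have h1 : Continuous fun s : ℝ => (1 + max s 0 : ℝ) :=
      continuous_const.add (continuous_id.max continuous_const)
    have h2 : Continuous fun s : ℝ => (1 + max s 0 : ℝ) ^ q :=
      h1.rpow_const (fun x => Or.inl (hmaxpos x).ne')
    exact (continuous_const.mul h2).mul (continuous_const.add hFc)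
  set H : ℝ → ℝ := fun t => ∫ s in (0:ℝ)..t, h s with hHdef
  have hHd : ∀ x : ℝ, HasDerivAt H (h x) x := fun x =>
    intervalIntegral.integral_hasDerivAt_right (hhc.intervalIntegrable _ _)
      (hhc.aestronglyMeasurable.stronglyMeasurableAtFilter) hhc.continuousAt
  have hHc : Continuous H := intervalIntegral.continuous_primitive
    (fun a b => hhc.intervalIntegrable a b) 0
  have hH0 : H 0 = 0 := intervalIntegral.integral_same
  -- KEY 1 : Gronwall integration
  have hkey1 : ∀ t, 0 ≤ t → (1 + t) ^ Cd * y t ≤ y 0 + H t := by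
    intro t0 ht0
    have hpowc : Continuous fun s : ℝ => (1 + s) ^ Cd :=
      (continuous_const.add continuous_id).rpow_const (fun x => Or.inr hCd0.le)
    set G : ℝ → ℝ := fun s => (1 + s) ^ Cd * Y s - H s with hGdef
    have hGc : ContinuousOn G (Set.Icc 0 t0) := ((hpowc.mul hYc).sub hHc).continuousOn
    have hGd : ∀ x ∈ Set.Ioo (0:ℝ) t0,
        HasDerivAt G (1 * Cd * (1 + x) ^ (Cd - 1) * Y x + (1 + x) ^ Cd * y' x - h x) x := by
      intro x hx
      have hx0 : 0 < x := hx.1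
      have hx1 : (0:ℝ) < 1 + x := by linarith
      have hyd : HasDerivAt Y (y' x) x := by
        apply (hderiv x hx0.le).congr_of_eventuallyEq
        filter_upwards [Ioi_mem_nhds hx0] with s hs
        exact hYy s (le_of_lt hs)
      have hpowd : HasDerivAt (fun s : ℝ => (1 + s) ^ Cd) (1 * Cd * (1 + x) ^ (Cd - 1)) x :=
        ((hasDerivAt_id x).const_add (1:ℝ)).rpow_const (Or.inl hx1.ne')
      exact (hpowd.mul hyd).sub (hHd x)
    have hGd0 : ∀ x ∈ Set.Ioo (0:ℝ) t0,
        1 * Cd * (1 + x) ^ (Cd - 1) * Y x + (1 + x) ^ Cd * y' x - h x ≤ 0 := by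
      intro x hx
      have hx0 : 0 < x := hx.1
      have hx1 : (0:ℝ) < 1 + x := by linarith
      have hineqx := hineq x hx0.le
      have hexp : -(d:ℝ)/2 - 1 = -p - 1 := by rw [hp]; ring
      rw [hexp, hFy x hx0.le] at hineqx
      have hP : (0:ℝ) < (1 + x) ^ Cd := Real.rpow_pos_of_pos hx1 _
      have hmul := mul_le_mul_of_nonneg_left hineqx hP.le
      have E1 : (1 + x) ^ Cd * (Cd / (1 + x) * y x) = Cd * (1 + x) ^ (Cd - 1) * y x := by
        rw [Real.rpow_sub_one hx1.ne' Cd]; field_simp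
      have E2 : (1 + x) ^ Cd * (C * Cd * (1 + x) ^ (-p - 1) * (1 + F x))
          = C * Cd * (1 + x) ^ q * (1 + F x) := by
        have : (1 + x) ^ Cd * (1 + x) ^ (-p - 1) = (1 + x) ^ q := by
          rw [← Real.rpow_add hx1]; congr 1; rw [hq]; ring
        calc (1 + x) ^ Cd * (C * Cd * (1 + x) ^ (-p - 1) * (1 + F x))
            = C * Cd * ((1 + x) ^ Cd * (1 + x) ^ (-p - 1)) * (1 + F x) := by ring
          _ = C * Cd * (1 + x) ^ q * (1 + F x) := by rw [this]
      have hYx : Y x = y x := hYy x hx0.le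
      have hhx : h x = C * Cd * (1 + x) ^ q * (1 + F x) := by
        simp only [hhdef, max_eq_left hx0.le]
      rw [hYx, hhx]
      rw [mul_add] at hmul
      rw [E1, E2] at hmul
      linarith
    have hdiff : DifferentiableOn ℝ G (interior (Set.Icc 0 t0)) := by
      rw [interior_Icc]
      exact fun x hx => (hGd x hx).differentiableAt.differentiableWithinAt
    have hnonpos : ∀ x ∈ interior (Set.Icc 0 t0), deriv G x ≤ 0 := by
      rw [interior_Icc]
      intro x hx
      rw [(hGd x hx).deriv]
      exact hGd0 x hx
    have hant := antitoneOn_of_deriv_nonpos (convex_Icc 0 t0) hGc hdiff hnonpos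
    have hle : G t0 ≤ G 0 := hant ⟨le_rfl, ht0⟩ ⟨ht0, le_rfl⟩ ht0
    have hG0 : G 0 = y 0 := by
      simp only [hGdef, hH0, add_zero, Real.one_rpow, one_mul, sub_zero, hYy 0 le_rfl]
    have hGt0 : G t0 = (1 + t0) ^ Cd * y t0 - H t0 := by
      simp only [hGdef, hYy t0 ht0]
    rw [hG0, hGt0] at hle
    linarith
  -- KEY 2 : bound on H
  obtain ⟨A, hA⟩ : ∃ A : ℝ, A = C * Cd / (Cd - p) := ⟨_, rfl⟩
  have hA0 : 0 < A := by
    rw [hA]; apply div_pos (mul_pos hC hCd0); linarith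
  have hkey2 : ∀ t, 0 ≤ t → H t ≤ A * (1 + t) ^ (Cd - p) * (1 + F t) := by
    intro t ht
    have hFt : 0 ≤ F t := hFnn t ht
    have h1Ft : (0:ℝ) < 1 + F t := by linarith
    obtain ⟨B, hB⟩ : ∃ B : ℝ, B = A * (1 + F t) := ⟨_, rfl⟩
    have hB0 : 0 < B := by rw [hB]; exact mul_pos hA0 h1Ft
    -- pointwise derivative of s ↦ B * (1+s)^(Cd-p)
    have hΦd : ∀ s ∈ Set.uIcc (0:ℝ) t,
        HasDerivAt (fun s : ℝ => B * (1 + s) ^ (Cd - p))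
          (B * (1 * (Cd - p) * (1 + s) ^ (Cd - p - 1))) s := by
      intro s hs
      rw [Set.uIcc_of_le ht] at hs
      have hs1 : (0:ℝ) < 1 + s := by linarith [hs.1]
      exact (((hasDerivAt_id s).const_add (1:ℝ)).rpow_const (Or.inl hs1.ne')).const_mul B
    have hΦc : Continuous fun s : ℝ => B * (1 * (Cd - p) * (1 + s) ^ (Cd - p - 1)) := by
      apply continuous_const.mul
      apply continuous_const.mul
      have hq0' : (0:ℝ) ≤ Cd - p - 1 := by rw [hq] at hq0; linarith
      exact (continuous_const.add continuous_id).rpow_const (fun x => Or.inr hq0')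
    have hftc : ∫ s in (0:ℝ)..t, B * (1 * (Cd - p) * (1 + s) ^ (Cd - p - 1))
        = B * (1 + t) ^ (Cd - p) - B * (1 + 0) ^ (Cd - p) :=
      intervalIntegral.integral_eq_sub_of_hasDerivAt hΦd (hΦc.intervalIntegrable _ _)
    have hmono : H t ≤ ∫ s in (0:ℝ)..t, B * (1 * (Cd - p) * (1 + s) ^ (Cd - p - 1)) := by
      apply intervalIntegral.integral_mono_on ht (hhc.intervalIntegrable _ _)
        (hΦc.intervalIntegrable _ _)
      intro s hs
      have hs0 : 0 ≤ s := hs.1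
      have hs1 : (0:ℝ) < 1 + s := by linarith
      have hFst : F s ≤ F t := hFmono hs.2
      have hco : (0:ℝ) ≤ C * Cd * (1 + s) ^ q :=
        mul_nonneg (mul_nonneg hC.le hCd0.le) (Real.rpow_nonneg hs1.le _)
      have : h s = C * Cd * (1 + s) ^ q * (1 + F s) := by
        simp only [hhdef, max_eq_left hs0]
      rw [this]
      have hstep : C * Cd * (1 + s) ^ q * (1 + F s) ≤ C * Cd * (1 + s) ^ q * (1 + F t) :=
        mul_le_mul_of_nonneg_left (by linarith) hco
      have hCdpne : Cd - p ≠ 0 := by intro h0; linarith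
      have heq : B * (1 * (Cd - p) * (1 + s) ^ (Cd - p - 1))
          = C * Cd * (1 + s) ^ q * (1 + F t) := by
        rw [hB, hA, hq]; field_simp
      rw [heq]; exact hstep
    have h10 : B * (1 + 0) ^ (Cd - p) = B := by norm_num
    have hpow0 : (0:ℝ) ≤ B * (1 + t) ^ (Cd - p) := by positivity
    rw [hftc, h10] at hmono
    calc H t ≤ B * (1 + t) ^ (Cd - p) - B := hmono
      _ ≤ B * (1 + t) ^ (Cd - p) := by linarith
      _ = A * (1 + t) ^ (Cd - p) * (1 + F t) := by rw [hB]; ring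
  -- combined : (1+t)^p y t ≤ y 0 + A (1 + F t)
  have hkey12 : ∀ t, 0 ≤ t → (1 + t) ^ p * y t ≤ y 0 + A * (1 + F t) := by
    intro t ht
    have ht1 : (0:ℝ) < 1 + t := by linarith
    have h1 := hkey1 t ht
    have h2 := hkey2 t ht
    obtain ⟨D, hD⟩ : ∃ D : ℝ, D = (1 + t) ^ (Cd - p) := ⟨_, rfl⟩
    have hD1 : 1 ≤ D := by rw [hD]; exact Real.one_le_rpow (by linarith) (by linarith)
    have hD0 : 0 < D := lt_of_lt_of_le one_pos hD1
    have hsplit : (1 + t) ^ Cd = D * (1 + t) ^ p := by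
      rw [hD, ← Real.rpow_add ht1]; congr 1; ring
    have hm0 : 0 ≤ (1 + t) ^ p * y t :=
      mul_nonneg (Real.rpow_nonneg ht1.le _) (hy t ht)
    have hy00 : 0 ≤ y 0 := hy 0 le_rfl
    have hAF : 0 ≤ A * (1 + F t) := by
      have := hFnn t ht; positivity
    have hDm : D * ((1 + t) ^ p * y t) ≤ y 0 + A * D * (1 + F t) := by
      rw [← mul_assoc, ← hsplit]
      calc (1 + t) ^ Cd * y t ≤ y 0 + H t := h1
        _ ≤ y 0 + A * (1 + t) ^ (Cd - p) * (1 + F t) := by linarith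
        _ = y 0 + A * D * (1 + F t) := by rw [hD]
    have hfin : D * ((1 + t) ^ p * y t) ≤ D * (y 0 + A * (1 + F t)) := by
      nlinarith [mul_nonneg (sub_nonneg.mpr hD1) hy00]
    exact le_of_mul_le_mul_left hfin hD0
  -- logs are at least 1 on the right half line
  have hlogge : ∀ s : ℝ, 0 ≤ s → 1 ≤ Real.log (e + s) := by
    intro s hs
    rw [he]
    have h1 : Real.log (Real.exp 1) ≤ Real.log (Real.exp 1 + s) :=
      Real.log_le_log (Real.exp_pos 1) (by linarith [Real.exp_pos 1])
    rwa [Real.log_exp] at h1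
  -- KEY 3 : tail integral estimate
  have hkey3 : ∀ T t' Mv : ℝ, 0 ≤ T → T ≤ t' → 0 ≤ Mv →
      (∀ s, T ≤ s → s ≤ t' → y s ≤ Mv * (1 + s) ^ (-p)) →
      (∫ s in T..t', Y s ^ 2) ≤ C₀ * Mv * e / (2 * (Real.log (e + T)) ^ 2) := by
    intro T t' Mv hT0 hTt' hMv0 hyp
    have hepos : ∀ s : ℝ, 0 ≤ s → (0:ℝ) < e + s := fun s hs => by linarith [he1]
    have hWd : ∀ s, 0 ≤ s → HasDerivAt (fun u : ℝ => -(C₀ * Mv * e / 2) / (Real.log (e + u)) ^ 2)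
        (C₀ * Mv * e / ((e + s) * (Real.log (e + s)) ^ 3)) s := by
      intro s hs
      have hes : (0:ℝ) < e + s := hepos s hs
      have hL : 1 ≤ Real.log (e + s) := hlogge s hs
      have hL0 : Real.log (e + s) ≠ 0 := by linarith
      have h1 : HasDerivAt (fun u : ℝ => Real.log (e + u)) (1 / (e + s)) s := by
        have := ((hasDerivAt_id s).const_add e).log hes.ne'
        simpa using this
      have h2 := h1.pow 2
      have h3 := (hasDerivAt_const s (-(C₀ * Mv * e / 2))).div h2 (pow_ne_zero 2 hL0)
      refine HasDerivAt.congr_deriv h3 ?_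
      simp only [Pi.pow_apply]
      field_simp
      ring
    have hwbc : ContinuousOn (fun s : ℝ => C₀ * Mv * e / ((e + s) * (Real.log (e + s)) ^ 3))
        (Set.uIcc T t') := by
      rw [Set.uIcc_of_le hTt']
      have hsub : ∀ s ∈ Set.Icc T t', (0:ℝ) < e + s := fun s hs => hepos s (le_trans hT0 hs.1)
      apply ContinuousOn.div continuousOn_const
      · apply ContinuousOn.mul ((continuous_const.add continuous_id).continuousOn)
        apply ContinuousOn.pow
        exact ContinuousOn.log ((continuous_const.add continuous_id).continuousOn)
          (fun s hs => (hsub s hs).ne')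
      · intro s hs
        have hL := hlogge s (le_trans hT0 hs.1)
        exact ne_of_gt (mul_pos (hsub s hs) (pow_pos (by linarith) 3))
    have hWftc : (∫ s in T..t', C₀ * Mv * e / ((e + s) * (Real.log (e + s)) ^ 3))
        = -(C₀ * Mv * e / 2) / (Real.log (e + t')) ^ 2
          - -(C₀ * Mv * e / 2) / (Real.log (e + T)) ^ 2 := by
      apply intervalIntegral.integral_eq_sub_of_hasDerivAt
      · intro s hs
        rw [Set.uIcc_of_le hTt'] at hs
        exact hWd s (le_trans hT0 hs.1)
      · exact hwbc.intervalIntegrable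
    have hmono : (∫ s in T..t', Y s ^ 2)
        ≤ ∫ s in T..t', C₀ * Mv * e / ((e + s) * (Real.log (e + s)) ^ 3) := by
      apply intervalIntegral.integral_mono_on hTt' (hYint T t') hwbc.intervalIntegrable
      intro s hs
      have hs0 : 0 ≤ s := le_trans hT0 hs.1
      have hs1 : (0:ℝ) < 1 + s := by linarith
      have hes : (0:ℝ) < e + s := hepos s hs0
      have hL : 1 ≤ Real.log (e + s) := hlogge s hs0
      have hL0 : (0:ℝ) < Real.log (e + s) := by linarith
      have b1 : y s ≤ C₀ / (Real.log (e + s)) ^ 3 := hlog s hs0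
      have b2 : y s ≤ Mv * (1 + s) ^ (-p) := hyp s hs.1 hs.2
      have hYs : Y s = y s := hYy s hs0
      have step1 : Y s ^ 2 ≤ (C₀ / (Real.log (e + s)) ^ 3) * (Mv * (1 + s) ^ (-p)) := by
        rw [hYs, sq]
        exact mul_le_mul b1 b2 (hy s hs0) (div_nonneg hC₀ (by positivity))
      have e1 : (1 + s) ^ (-p) ≤ (1 + s) ^ (-1 : ℝ) :=
        Real.rpow_le_rpow_of_exponent_le (by linarith) (by linarith)
      have e3 : (1 + s) ^ (-1:ℝ) ≤ e / (e + s) := by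
        rw [Real.rpow_neg_one, inv_eq_one_div, div_le_div_iff₀ hs1 hes]
        nlinarith [mul_le_mul_of_nonneg_right he1.le hs0]
      have step2 : (C₀ / (Real.log (e + s)) ^ 3) * (Mv * (1 + s) ^ (-p))
          ≤ (C₀ / (Real.log (e + s)) ^ 3) * (Mv * (e / (e + s))) := by
        apply mul_le_mul_of_nonneg_left _ (div_nonneg hC₀ (by positivity))
        exact mul_le_mul_of_nonneg_left (le_trans e1 e3) hMv0
      have heq : (C₀ / (Real.log (e + s)) ^ 3) * (Mv * (e / (e + s)))
          = C₀ * Mv * e / ((e + s) * (Real.log (e + s)) ^ 3) := by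
        field_simp
      rw [← heq]
      exact le_trans step1 step2
    rw [hWftc] at hmono
    have hLt' : 1 ≤ Real.log (e + t') := hlogge t' (le_trans hT0 hTt')
    have hLT : 1 ≤ Real.log (e + T) := hlogge T hT0
    have hWt'le : -(C₀ * Mv * e / 2) / (Real.log (e + t')) ^ 2 ≤ 0 := by
      rw [neg_div]
      apply neg_nonpos_of_nonneg
      apply div_nonneg _ (by positivity)
      have h9 := mul_nonneg (mul_nonneg hC₀ hMv0) (le_of_lt (lt_trans one_pos he1))
      linarith
    have hWTeq : -(C₀ * Mv * e / 2) / (Real.log (e + T)) ^ 2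
        = -(C₀ * Mv * e / (2 * (Real.log (e + T)) ^ 2)) := by
      rw [neg_div, div_div]
    rw [hWTeq] at hmono
    linarith
  -- choice of the threshold T
  obtain ⟨T, hT⟩ : ∃ T : ℝ, T = Real.exp (1 + Real.sqrt (e * (A * C₀))) := ⟨_, rfl⟩
  have hT0 : 0 < T := by rw [hT]; exact Real.exp_pos _
  have hsq0 : 0 ≤ Real.sqrt (e * (A * C₀)) := Real.sqrt_nonneg _
  have hlogT : Real.sqrt (e * (A * C₀)) ≤ Real.log (e + T) := by
    have h1 : Real.log T ≤ Real.log (e + T) := Real.log_le_log hT0 (by linarith)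
    have h2 : Real.log T = 1 + Real.sqrt (e * (A * C₀)) := by rw [hT, Real.log_exp]
    linarith
  have hLT1 : 1 ≤ Real.log (e + T) := hlogge T hT0.le
  have hsmall : A * C₀ * e / (2 * (Real.log (e + T)) ^ 2) ≤ 1 / 2 := by
    have h2 : e * (A * C₀) ≤ (Real.log (e + T)) ^ 2 := by
      have h3 := Real.sq_sqrt (by positivity : (0:ℝ) ≤ e * (A * C₀))
      have h4 : Real.sqrt (e * (A * C₀)) ^ 2 ≤ (Real.log (e + T)) ^ 2 :=
        pow_le_pow_left₀ hsq0 hlogT 2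
      rw [h3] at h4
      exact h4
    rw [div_le_div_iff₀ (by positivity) (by norm_num : (0:ℝ) < 2)]
    linarith
  obtain ⟨C₁, hC₁⟩ : ∃ C₁ : ℝ, C₁ = 2 * (y 0 + A * (1 + F T)) := ⟨_, rfl⟩
  have hC₁0 : 0 < C₁ := by
    rw [hC₁]
    have h1 := hy 0 le_rfl
    have h2 := hFnn T hT0.le
    have h3 : 0 < A * (1 + F T) := mul_pos hA0 (by linarith)
    linarith
  refine ⟨C₁, hC₁0, ?_⟩
  intro t0 ht0
  obtain ⟨t', ht'⟩ : ∃ t' : ℝ, t' = max t0 T := ⟨_, rfl⟩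
  have hTt' : T ≤ t' := by rw [ht']; exact le_max_right _ _
  have ht0t' : t0 ≤ t' := by rw [ht']; exact le_max_left _ _
  have ht'0 : 0 ≤ t' := le_trans hT0.le hTt'
  -- the maximum of (1+s)^p y s on [0, t']
  have hmc : ContinuousOn (fun s : ℝ => (1 + s) ^ p * y s) (Set.Icc 0 t') := by
    apply ContinuousOn.mul
    · exact ((continuous_const.add continuous_id).rpow_const
        (fun x => Or.inr (by linarith : (0:ℝ) ≤ p))).continuousOn
    · exact fun s hs => (hyc s hs.1).continuousWithinAt
  obtain ⟨sm, hsmmem, hsmmax⟩ :=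
    isCompact_Icc.exists_isMaxOn ⟨0, Set.left_mem_Icc.mpr ht'0⟩ hmc
  obtain ⟨Mv, hMv⟩ : ∃ Mv : ℝ, Mv = (1 + sm) ^ p * y sm := ⟨_, rfl⟩
  have hmax : ∀ s ∈ Set.Icc (0:ℝ) t', (1 + s) ^ p * y s ≤ Mv := by
    intro s hs; rw [hMv]; exact isMaxOn_iff.mp hsmmax s hs
  have hMv0 : 0 ≤ Mv := by
    have h0m : (0:ℝ) ≤ (1 + 0) ^ p * y 0 :=
      mul_nonneg (Real.rpow_nonneg (by norm_num) _) (hy 0 le_rfl)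
    exact le_trans h0m (hmax 0 (Set.left_mem_Icc.mpr ht'0))
  have hyle : ∀ s, 0 ≤ s → s ≤ t' → y s ≤ Mv * (1 + s) ^ (-p) := by
    intro s hs0 hst'
    have hs1 : (0:ℝ) < 1 + s := by linarith
    have hm := hmax s ⟨hs0, hst'⟩
    have h1 : (1 + s) ^ (-p) * (1 + s) ^ p = 1 := by
      rw [← Real.rpow_add hs1]; norm_num
    calc y s = (1 + s) ^ (-p) * ((1 + s) ^ p * y s) := by
          rw [← mul_assoc, h1, one_mul]
      _ ≤ (1 + s) ^ (-p) * Mv :=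
          mul_le_mul_of_nonneg_left hm (Real.rpow_nonneg hs1.le _)
      _ = Mv * (1 + s) ^ (-p) := mul_comm _ _
  have htail := hkey3 T t' Mv hT0.le hTt' hMv0
    (fun s h1 h2 => hyle s (le_trans hT0.le h1) h2)
  have hFt' : F t' ≤ F T + C₀ * Mv * e / (2 * (Real.log (e + T)) ^ 2) := by
    have hadd := intervalIntegral.integral_add_adjacent_intervals (hYint 0 T) (hYint T t')
    have heqF : F t' = F T + ∫ s in T..t', Y s ^ 2 := by
      simp only [hFdef]; exact hadd.symm
    rw [heqF]
    linarith
  have hb1 : Mv ≤ y 0 + A * (1 + F t') := by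
    rw [hMv]
    have hsm0 : 0 ≤ sm := hsmmem.1
    calc (1 + sm) ^ p * y sm ≤ y 0 + A * (1 + F sm) := hkey12 sm hsm0
      _ ≤ y 0 + A * (1 + F t') := by
          have h5 := hFmono hsmmem.2
          have h6 : A * (1 + F sm) ≤ A * (1 + F t') :=
            mul_le_mul_of_nonneg_left (by linarith) hA0.le
          linarith
  have habs : A * (C₀ * Mv * e / (2 * (Real.log (e + T)) ^ 2)) ≤ Mv / 2 := by
    calc A * (C₀ * Mv * e / (2 * (Real.log (e + T)) ^ 2))
        = Mv * (A * C₀ * e / (2 * (Real.log (e + T)) ^ 2)) := by ring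
      _ ≤ Mv * (1 / 2) := mul_le_mul_of_nonneg_left hsmall hMv0
      _ = Mv / 2 := by ring
  have hMvC₁ : Mv ≤ C₁ := by
    have hstep : Mv ≤ y 0 + A * (1 + (F T + C₀ * Mv * e / (2 * (Real.log (e + T)) ^ 2))) := by
      refine le_trans hb1 ?_
      have h6 : A * (1 + F t') ≤ A * (1 + (F T + C₀ * Mv * e / (2 * (Real.log (e + T)) ^ 2))) :=
        mul_le_mul_of_nonneg_left (by linarith) hA0.le
      linarith
    rw [hC₁]
    have hexpand : A * (1 + (F T + C₀ * Mv * e / (2 * (Real.log (e + T)) ^ 2)))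
        = A * (1 + F T) + A * (C₀ * Mv * e / (2 * (Real.log (e + T)) ^ 2)) := by ring
    rw [hexpand] at hstep
    linarith
  have hres := hyle t0 ht0 ht0t'
  have hexp2 : -(d:ℝ)/2 = -p := by rw [hp]; ring
  rw [hexp2]
  calc y t0 ≤ Mv * (1 + t0) ^ (-p) := hres
    _ ≤ C₁ * (1 + t0) ^ (-p) :=
        mul_le_mul_of_nonneg_right hMvC₁ (Real.rpow_nonneg (by linarith) _)
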